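/- If α is a concatenation of blocks [0] and [m,m] (m≠0) with b₁ blocks of the second kind and b₀ blocks of the first kind, then EJ α t = (1/2)^{b₁} · t^{b₀+b₁}/(b₀+b₁)!; in particular EJ α depends only on the total number of blocks and the number of pair-blocks, not on the order of the blocks or the identities of the nonzero letters. -/

import Mathlib

open intervalIntegral

noncomputable def EJrev : List ℕ → ℝ → ℝ
  | [], _ => 1
  | [a], t => if a = 0 then ∫ s in (0:ℝ)..t, EJrev [] s else 0
  | a :: b :: rest, t =>
      if a = 0 then ∫ s in (0:ℝ)..t, EJrev (b :: rest) s
      else if b = a then (1/2) * ∫ s in (0:ℝ)..t, EJrev rest s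
      else 0

/-- Expectation of the Stratonovich iterated integral `J_α(t)`, defined by the
recursion on the last letter of the word. -/
noncomputable def EJ (α : List ℕ) (t : ℝ) : ℝ := EJrev α.reverse t

/-- A block is `[0]` or `[m,m]` with `m ≠ 0`. -/
def IsBlock (b : List ℕ) : Prop := b = [0] ∨ ∃ m : ℕ, m ≠ 0 ∧ b = [m, m]

/-- A word is admissible if it is a concatenation of blocks. -/
def Admissible (α : List ℕ) : Prop :=
  ∃ L : List (List ℕ), (∀ b ∈ L, IsBlock b) ∧ L.flatten = α

lemma EJrev_zero_cons (γ : List ℕ) (t : ℝ) :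
    EJrev (0 :: γ) t = ∫ s in (0:ℝ)..t, EJrev γ s := by
  cases γ <;> simp [EJrev]

lemma EJrev_pair_cons (m : ℕ) (hm : m ≠ 0) (γ : List ℕ) (t : ℝ) :
    EJrev (m :: m :: γ) t = (1/2) * ∫ s in (0:ℝ)..t, EJrev γ s := by
  simp [EJrev, hm]

lemma integral_poly (C : ℝ) (n : ℕ) (t : ℝ) :
    (∫ s in (0:ℝ)..t, C * s ^ n / (Nat.factorial n)) =
      C * t ^ (n+1) / (Nat.factorial (n+1)) := by
  have : (∫ s in (0:ℝ)..t, C * s ^ n / (Nat.factorial n)) =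
      (C / (Nat.factorial n)) * ∫ s in (0:ℝ)..t, s ^ n := by
    rw [← intervalIntegral.integral_const_mul]
    congr 1; ext s; ring
  rw [this, integral_pow]
  have h1 : ((Nat.factorial n : ℝ)) ≠ 0 := by positivity
  have h2 : ((n:ℝ) + 1) ≠ 0 := by positivity
  rw [Nat.factorial_succ]
  push_cast
  field_simp
  ring_nf

lemma key (L : List (List ℕ)) (hL : ∀ b ∈ L, IsBlock b) :
    ∀ t : ℝ, EJrev L.flatten.reverse t =
      (1/2 : ℝ) ^ ((L.filter (· ≠ [0])).length) * t ^ L.length / (Nat.factorial L.length) := by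
  induction L using List.reverseRecOn with
  | nil => intro t; simp [EJrev]
  | append_singleton L b ih =>
    have hb : IsBlock b := hL b (by simp)
    have ihL := ih (fun b hb => hL b (by simp [hb]))
    intro t
    rcases hb with hb | ⟨m, hm, hb⟩ <;> subst hb
    · have hrw : (L ++ [[0]]).flatten.reverse = 0 :: L.flatten.reverse := by simp
      rw [hrw, EJrev_zero_cons]
      have : (∫ s in (0:ℝ)..t, EJrev L.flatten.reverse s) =
          ∫ s in (0:ℝ)..t, (1/2 : ℝ) ^ ((L.filter (· ≠ [0])).length) * s ^ L.length / (Nat.factorial L.length) := by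
        apply intervalIntegral.integral_congr
        intro s _; exact ihL s
      rw [this, integral_poly]
      simp [List.filter_append]
    · have hrw : (L ++ [[m,m]]).flatten.reverse = m :: m :: L.flatten.reverse := by simp
      rw [hrw, EJrev_pair_cons m hm]
      have : (∫ s in (0:ℝ)..t, EJrev L.flatten.reverse s) =
          ∫ s in (0:ℝ)..t, (1/2 : ℝ) ^ ((L.filter (· ≠ [0])).length) * s ^ L.length / (Nat.factorial L.length) := by
        apply intervalIntegral.integral_congr
        intro s _; exact ihL s
      rw [this, integral_poly]
      have hmm : ([m,m] : List ℕ) ≠ [0] := by simp [hm]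
      simp [List.filter_append, hmm, pow_succ]
      ring

theorem stmt11 (α : List ℕ) (L : List (List ℕ))
    (hL : ∀ b ∈ L, IsBlock b) (hjoin : L.flatten = α)
    (b₀ b₁ : ℕ) (hb₀ : b₀ = L.count [0]) (hb₁ : b₁ = (L.filter (· ≠ [0])).length) :
    ∀ t : ℝ, EJ α t = (1/2 : ℝ) ^ b₁ * t ^ (b₀ + b₁) / (Nat.factorial (b₀ + b₁)) := by
  intro t
  have hlen : b₀ + b₁ = L.length := by
    subst hb₀ hb₁
    clear hL hjoin
    induction L with
    | nil => simp
    | cons b M ih =>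
      by_cases h : b = [0] <;> simp [h, List.count_cons, List.filter_cons, ne_eq] at ih ⊢ <;> omega
  subst hjoin hb₁
  rw [EJ, key L hL t, hlen]
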